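/- arXiv:1702.08128 — 2 statements merged into one kernel-verified Lean document; each statement's English description precedes it below -/
import Mathlib

section
/- Let ℓ = 4 and define ℓ_t(n) = Σ_{i≥0} (−1)^i w_{g^i(t)}(n), where w_s(n) = C(n, (n−s)/2) − C(n, (n−s)/2 − 1) if 0 ≤ s ≤ n and s ≡ n mod 2, and w_s(n) = 0 otherwise, and g(t) = t+6 if t ≡ 0 mod 4, g(t) = t+2 if t ≡ 2 mod 4, g(t) = t+4 if t ≡ 1 mod 4. Then for every odd n ≥ 3, ℓ_1(n) = 2^{(n−1)/2}. -/
/-- `w_s(n) = C(n,(n-s)/2) - C(n,(n-s)/2 - 1)` if `0 ≤ s ≤ n` and `s ≡ n (mod 2)`,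
and `0` otherwise (with the convention `C(n,-1) = 0`). -/
def wdim (s n : ℕ) : ℤ :=
  if s ≤ n ∧ (n - s) % 2 = 0 then
    (n.choose ((n - s) / 2) : ℤ) -
      (if (n - s) / 2 = 0 then 0 else (n.choose ((n - s) / 2 - 1) : ℤ))
  else 0

/-- The `g` function for `ℓ = 4`:  `g(t) = t+6` if `t ≡ 0 (mod 4)`, `t+2` if
`t ≡ 2 (mod 4)`, `t+4` if `t ≡ 1 (mod 4)`. -/
def g4 (t : ℕ) : ℕ :=
  if t % 4 = 0 then t + 6 else if t % 4 = 2 then t + 2 else t + 4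

/-- `ℓ_t(n) = Σ_{i≥0} (-1)^i w_{gⁱ(t)}(n)`; the sum is finite since `w_s(n) = 0`
for `s > n`, so it may be truncated at `i = n`. -/
def elldim (g : ℕ → ℕ) (t n : ℕ) : ℤ :=
  ∑ i ∈ Finset.range (n + 1), (-1 : ℤ) ^ i * wdim (g^[i] t) n


open Finset

private def sgn : ℕ → ℤ
  | 0 => 1
  | 1 => -1
  | (n+2) => - sgn n

private lemma sgn_add_two (n : ℕ) : sgn (n + 2) = - sgn n := rfl

private lemma sgn_two_mul (i : ℕ) : sgn (2 * i) = (-1) ^ i := by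
  induction i with
  | zero => rfl
  | succ k ih =>
    have h : 2 * (k + 1) = 2 * k + 2 := by ring
    rw [h, sgn_add_two, ih, pow_succ]; ring

private lemma sgn_two_mul_add_one (i : ℕ) : sgn (2 * i + 1) = - (-1) ^ i := by
  induction i with
  | zero => rfl
  | succ k ih =>
    have h : 2 * (k + 1) + 1 = (2 * k + 1) + 2 := by ring
    rw [h, sgn_add_two, ih, pow_succ]; ring

private lemma pascalZ (a k : ℕ) :
    ((a + 1).choose (k + 1) : ℤ) = (a.choose k : ℤ) + (a.choose (k + 1) : ℤ) := by
  exact_mod_cast Nat.choose_succ_succ' a k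

private lemma Tkey (m : ℕ) :
    ∑ k ∈ Finset.range (m + 1), sgn (m - k) * ((2 * m + 1).choose k : ℤ) = 2 ^ m := by
  induction m with
  | zero => simp [sgn]
  | succ m ih =>
    have en : 2 * (m + 1) + 1 = 2 * m + 1 + 1 + 1 := by ring
    rw [en]
    generalize hn : 2 * m + 1 = n at ih ⊢
    have h1 : ∑ k ∈ Finset.range (m + 1 + 1), sgn (m + 1 - k) * ((n + 1 + 1).choose k : ℤ)
        = (∑ k ∈ Finset.range (m + 1), sgn (m - k) * ((n + 1).choose k : ℤ))
          + (∑ k ∈ Finset.range (m + 1), sgn (m - k) * ((n + 1).choose (k + 1) : ℤ))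
          + sgn (m + 1) := by
      rw [Finset.sum_range_succ' (fun k => sgn (m + 1 - k) * ((n + 1 + 1).choose k : ℤ)) (m + 1)]
      congr 1
      · rw [← Finset.sum_add_distrib]
        refine Finset.sum_congr rfl fun k hk => ?_
        have e : m + 1 - (k + 1) = m - k := by omega
        rw [e, pascalZ]; ring
      · simp
    have hA : ∑ k ∈ Finset.range (m + 1), sgn (m - k) * ((n + 1).choose k : ℤ)
        = (∑ k ∈ Finset.range m, sgn (m - 1 - k) * (n.choose k : ℤ))
          + (∑ k ∈ Finset.range m, sgn (m - 1 - k) * (n.choose (k + 1) : ℤ))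
          + sgn m := by
      rw [Finset.sum_range_succ' (fun k => sgn (m - k) * ((n + 1).choose k : ℤ)) m]
      congr 1
      · rw [← Finset.sum_add_distrib]
        refine Finset.sum_congr rfl fun k hk => ?_
        have e : m - (k + 1) = m - 1 - k := by omega
        rw [e, pascalZ]; ring
      · simp
    have hB : ∑ k ∈ Finset.range (m + 1), sgn (m - k) * ((n + 1).choose (k + 1) : ℤ)
        = (∑ k ∈ Finset.range (m + 1), sgn (m - k) * (n.choose k : ℤ))
          + (∑ k ∈ Finset.range (m + 1), sgn (m - k) * (n.choose (k + 1) : ℤ)) := by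
      rw [← Finset.sum_add_distrib]
      refine Finset.sum_congr rfl fun k hk => ?_
      rw [pascalZ]; ring
    have hQ : ∑ k ∈ Finset.range (m + 1), sgn (m - k) * (n.choose k : ℤ)
        = (∑ k ∈ Finset.range m, sgn (m - 1 - k) * (n.choose (k + 1) : ℤ)) + sgn m := by
      rw [Finset.sum_range_succ' (fun k => sgn (m - k) * (n.choose k : ℤ)) m]
      congr 1
      · refine Finset.sum_congr rfl fun k hk => ?_
        have e : m - (k + 1) = m - 1 - k := by omega
        rw [e]
      · simp
    have hV : ∑ k ∈ Finset.range (m + 1 + 1), sgn (m + 1 - k) * (n.choose k : ℤ)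
        = (∑ k ∈ Finset.range (m + 1), sgn (m - k) * (n.choose (k + 1) : ℤ)) + sgn (m + 1) := by
      rw [Finset.sum_range_succ' (fun k => sgn (m + 1 - k) * (n.choose k : ℤ)) (m + 1)]
      congr 1
      · refine Finset.sum_congr rfl fun k hk => ?_
        have e : m + 1 - (k + 1) = m - k := by omega
        rw [e]
      · simp
    have hV2 : ∑ k ∈ Finset.range (m + 1 + 1), sgn (m + 1 - k) * (n.choose k : ℤ)
        = - ∑ k ∈ Finset.range m, sgn (m - 1 - k) * (n.choose k : ℤ) := by
      rw [Finset.sum_range_succ, Finset.sum_range_succ]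
      have e1 : m + 1 - m = 1 := by omega
      have e2 : m + 1 - (m + 1) = 0 := by omega
      have e3 : (n.choose (m + 1) : ℤ) = (n.choose m : ℤ) := by
        have := Nat.choose_symm_half m
        rw [hn] at this
        exact_mod_cast this
      rw [e1, e2, e3]
      have e4 : ∑ k ∈ Finset.range m, sgn (m + 1 - k) * (n.choose k : ℤ)
          = ∑ k ∈ Finset.range m, -(sgn (m - 1 - k) * (n.choose k : ℤ)) := by
        refine Finset.sum_congr rfl fun k hk => ?_
        have hk' : k < m := Finset.mem_range.mp hk
        have e : m + 1 - k = (m - 1 - k) + 2 := by omega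
        rw [e, sgn_add_two]; ring
      rw [e4, Finset.sum_neg_distrib]
      rw [show sgn 1 = -1 from rfl, show sgn 0 = 1 from rfl]
      ring
    have hp : (2 : ℤ) ^ (m + 1) = 2 * 2 ^ m := by ring
    linarith [h1, hA, hB, hQ, hV, hV2, ih]


private lemma parity_sum (f : ℕ → ℤ) (M : ℕ) :
    ∑ j ∈ Finset.range (2 * M), sgn j * f j
      = ∑ i ∈ Finset.range M, (-1 : ℤ) ^ i * (f (2 * i) - f (2 * i + 1)) := by
  induction M with
  | zero => simp
  | succ M ih =>
    have h : 2 * (M + 1) = (2 * M + 1) + 1 := by ring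
    rw [h, Finset.sum_range_succ, Finset.sum_range_succ, Finset.sum_range_succ, ih,
      sgn_two_mul, sgn_two_mul_add_one]
    ring

private lemma g4_iterate (i : ℕ) : g4^[i] 1 = 4 * i + 1 := by
  induction i with
  | zero => rfl
  | succ k ih =>
    rw [Function.iterate_succ_apply', ih, g4]
    rw [if_neg (by omega), if_neg (by omega)]
    ring

private lemma wdim_eval (m i : ℕ) (h : 2 * i ≤ m) :
    wdim (4 * i + 1) (2 * m + 1)
      = ((2 * m + 1).choose (m - 2 * i) : ℤ)
        - (if m - 2 * i = 0 then 0 else ((2 * m + 1).choose (m - 2 * i - 1) : ℤ)) := by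
  have h1 : 4 * i + 1 ≤ 2 * m + 1 := by omega
  have h2 : (2 * m + 1 - (4 * i + 1)) % 2 = 0 := by omega
  have h3 : (2 * m + 1 - (4 * i + 1)) / 2 = m - 2 * i := by omega
  rw [wdim, if_pos ⟨h1, h2⟩, h3]

private lemma wdim_zero' (m i : ℕ) (h : m < 2 * i) :
    wdim (4 * i + 1) (2 * m + 1) = 0 := by
  rw [wdim, if_neg (by omega)]

private lemma ell_eq (m : ℕ) : elldim g4 1 (2 * m + 1) = 2 ^ m := by
  classical
  set f : ℕ → ℤ := fun j => if j ≤ m then ((2 * m + 1).choose (m - j) : ℤ) else 0 with hf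
  have step1 : elldim g4 1 (2 * m + 1)
      = ∑ i ∈ Finset.range (m + 1), (-1 : ℤ) ^ i * wdim (4 * i + 1) (2 * m + 1) := by
    rw [elldim]
    have hsub : Finset.range (m + 1) ⊆ Finset.range (2 * m + 1 + 1) := by
      intro x hx; simp only [Finset.mem_range] at *; omega
    have hz : ∀ x ∈ Finset.range (2 * m + 1 + 1), x ∉ Finset.range (m + 1) →
        (-1 : ℤ) ^ x * wdim (g4^[x] 1) (2 * m + 1) = 0 := by
      intro x hx hx'
      simp only [Finset.mem_range, not_lt] at hx hx'
      rw [g4_iterate, wdim_zero' m x (by omega), mul_zero]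
    rw [← Finset.sum_subset hsub hz]
    exact Finset.sum_congr rfl fun i hi => by rw [g4_iterate]
  have step2 : ∀ i ∈ Finset.range (m + 1),
      (-1 : ℤ) ^ i * wdim (4 * i + 1) (2 * m + 1)
        = (-1 : ℤ) ^ i * (f (2 * i) - f (2 * i + 1)) := by
    intro i hi
    by_cases h : 2 * i ≤ m
    · rw [wdim_eval m i h]
      have e1 : f (2 * i) = ((2 * m + 1).choose (m - 2 * i) : ℤ) := by
        simp only [hf]; rw [if_pos h]
      have e2 : f (2 * i + 1)
          = (if m - 2 * i = 0 then 0 else ((2 * m + 1).choose (m - 2 * i - 1) : ℤ)) := by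
        simp only [hf]
        by_cases h2 : 2 * i + 1 ≤ m
        · rw [if_pos h2, if_neg (by omega)]
          have e : m - (2 * i + 1) = m - 2 * i - 1 := by omega
          rw [e]
        · rw [if_neg h2, if_pos (by omega)]
      rw [e1, e2]
    · rw [wdim_zero' m i (by omega)]
      have e1 : f (2 * i) = 0 := by simp only [hf]; rw [if_neg (by omega)]
      have e2 : f (2 * i + 1) = 0 := by simp only [hf]; rw [if_neg (by omega)]
      rw [e1, e2]; ring
  have step3 : ∑ i ∈ Finset.range (m + 1), (-1 : ℤ) ^ i * (f (2 * i) - f (2 * i + 1))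
      = ∑ j ∈ Finset.range (2 * (m + 1)), sgn j * f j := (parity_sum f (m + 1)).symm
  have step4 : ∑ j ∈ Finset.range (2 * (m + 1)), sgn j * f j
      = ∑ j ∈ Finset.range (m + 1), sgn j * f j := by
    have hsub : Finset.range (m + 1) ⊆ Finset.range (2 * (m + 1)) := by
      intro x hx; simp only [Finset.mem_range] at *; omega
    have hz : ∀ x ∈ Finset.range (2 * (m + 1)), x ∉ Finset.range (m + 1) →
        sgn x * f x = 0 := by
      intro x hx hx'
      simp only [Finset.mem_range, not_lt] at hx hx'
      have hfx : f x = 0 := by simp only [hf]; rw [if_neg (by omega)]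
      rw [hfx, mul_zero]
    exact (Finset.sum_subset hsub hz).symm
  have step5 : ∑ j ∈ Finset.range (m + 1), sgn j * f j
      = ∑ j ∈ Finset.range (m + 1), sgn j * ((2 * m + 1).choose (m - j) : ℤ) := by
    refine Finset.sum_congr rfl fun j hj => ?_
    have hj' : j ≤ m := by have := Finset.mem_range.mp hj; omega
    simp only [hf]; rw [if_pos hj']
  have step6 : ∑ j ∈ Finset.range (m + 1), sgn j * ((2 * m + 1).choose (m - j) : ℤ)
      = ∑ k ∈ Finset.range (m + 1), sgn (m - k) * ((2 * m + 1).choose k : ℤ) := by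
    have hrefl := Finset.sum_range_reflect
      (fun j => sgn j * ((2 * m + 1).choose (m - j) : ℤ)) (m + 1)
    rw [← hrefl]
    refine Finset.sum_congr rfl fun k hk => ?_
    have hk' : k ≤ m := by have := Finset.mem_range.mp hk; omega
    have e1 : m + 1 - 1 - k = m - k := by omega
    have e2 : m - (m - k) = k := by omega
    rw [e1, e2]
  rw [step1, Finset.sum_congr rfl step2, step3, step4, step5, step6, Tkey]


/-- For `ℓ = 4` and every odd `n ≥ 3`, `ℓ_1(n) = 2^{(n-1)/2}`. -/
theorem ell_one_ising (n : ℕ) (hn : Odd n) (h3 : 3 ≤ n) :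
    elldim g4 1 n = 2 ^ ((n - 1) / 2) := by
  obtain ⟨m, hm⟩ := hn
  have h2 : n = 2 * m + 1 := by omega
  subst h2
  rw [ell_eq]
  congr 1
  omega
end

section
/- In the even part of the complex Clifford algebra on generators γ_1,…,γ_n with relations γ_iγ_j + γ_jγ_i = δ_{ij}, the elements F_j = (1/√2)(1 + 2i γ_j γ_{j+1}) for j = 1,…,n−1 satisfy the Temperley-Lieb relations: F_j² = √2·F_j, F_j F_{j±1} F_j = F_j, and F_j F_k = F_k F_j when |j−k| ≥ 2. -/
open Complex

lemma sqrt2_mul : ((Real.sqrt 2 : ℝ) : ℂ) * ((Real.sqrt 2 : ℝ) : ℂ) = 2 := by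
  norm_cast
  exact Real.mul_self_sqrt (by norm_num)

lemma sqrt2_ne : ((Real.sqrt 2 : ℝ) : ℂ) ≠ 0 := by
  intro h
  have := sqrt2_mul
  rw [h] at this; simp at this

lemma TL_sq {A : Type*} [Ring A] [Algebra ℂ A] (a : A)
    (ha : a * a = -((4:ℂ)⁻¹) • 1) :
    (((Real.sqrt 2 : ℂ))⁻¹ • (1 + (2*I) • a)) * (((Real.sqrt 2 : ℂ))⁻¹ • (1 + (2*I) • a))
      = (Real.sqrt 2 : ℂ) • (((Real.sqrt 2 : ℂ))⁻¹ • (1 + (2*I) • a)) := by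
  have key : (1 + (2*I) • a) * (1 + (2*I) • a) = (2:ℂ) • (1 + (2*I) • a) := by
    simp only [mul_add, add_mul, one_mul, mul_one, smul_add, smul_smul, mul_smul_comm,
      smul_mul_assoc, ha]
    match_scalars <;> simp [Complex.ext_iff] <;> ring
  rw [smul_mul_smul_comm, key, smul_smul, smul_smul]
  congr 1
  field_simp
  linear_combination -sqrt2_mul

lemma TL_braid {A : Type*} [Ring A] [Algebra ℂ A] (a b : A)
    (ha : a * a = -((4:ℂ)⁻¹) • 1)
    (hab : a * b = -(b * a))
    (haba : a * b * a = (4:ℂ)⁻¹ • b) :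
    (((Real.sqrt 2 : ℂ))⁻¹ • (1 + (2*I) • a)) * (((Real.sqrt 2 : ℂ))⁻¹ • (1 + (2*I) • b))
      * (((Real.sqrt 2 : ℂ))⁻¹ • (1 + (2*I) • a))
      = (((Real.sqrt 2 : ℂ))⁻¹ • (1 + (2*I) • a)) := by
  have hba : b * a = -(a * b) := by rw [hab, neg_neg]
  have key : (1 + (2*I) • a) * (1 + (2*I) • b) * (1 + (2*I) • a)
      = (2:ℂ) • (1 + (2*I) • a) := by
    simp only [mul_add, add_mul, one_mul, mul_one, smul_add, smul_smul, mul_smul_comm,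
      smul_mul_assoc, ha, haba, hba, smul_neg]
    match_scalars <;> simp [Complex.ext_iff] <;> ring
  rw [smul_mul_smul_comm, smul_mul_smul_comm, key, smul_smul]
  rw [show ((((Real.sqrt 2:ℝ):ℂ))⁻¹ * (((Real.sqrt 2:ℝ):ℂ))⁻¹ * (((Real.sqrt 2:ℝ):ℂ))⁻¹ * 2)
      = (((Real.sqrt 2:ℝ):ℂ))⁻¹ by field_simp; linear_combination -sqrt2_mul]

lemma TL_comm {A : Type*} [Ring A] [Algebra ℂ A] (a b : A)
    (hab : a * b = b * a) :
    (((Real.sqrt 2 : ℂ))⁻¹ • (1 + (2*I) • a)) * (((Real.sqrt 2 : ℂ))⁻¹ • (1 + (2*I) • b))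
      = (((Real.sqrt 2 : ℂ))⁻¹ • (1 + (2*I) • b)) * (((Real.sqrt 2 : ℂ))⁻¹ • (1 + (2*I) • a)) := by
  simp only [smul_mul_smul_comm, mul_add, add_mul, one_mul, mul_one, smul_add, smul_smul,
    mul_smul_comm, smul_mul_assoc, hab]
  match_scalars <;> ring

lemma gamma_pair {A : Type*} [Ring A] [Algebra ℂ A] (x y z : A)
    (hxx : x * x = (2:ℂ)⁻¹ • 1) (hyy : y * y = (2:ℂ)⁻¹ • 1) (hzz : z * z = (2:ℂ)⁻¹ • 1)
    (hyx : y * x = -(x * y)) (hzx : z * x = -(x * z)) (hzy : z * y = -(y * z)) :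
    ((x*y) * (x*y) = -((4:ℂ)⁻¹) • 1) ∧
    ((x*y) * (y*z) = -((y*z) * (x*y))) ∧
    ((x*y) * (y*z) * (x*y) = (4:ℂ)⁻¹ • (y*z)) ∧
    ((y*z) * (x*y) * (y*z) = (4:ℂ)⁻¹ • (x*y)) := by
  have Hyx : ∀ t, y * (x * t) = -(x * (y * t)) := fun t => by
    rw [← mul_assoc, hyx, neg_mul, mul_assoc]
  have Hzx : ∀ t, z * (x * t) = -(x * (z * t)) := fun t => by
    rw [← mul_assoc, hzx, neg_mul, mul_assoc]
  have Hzy : ∀ t, z * (y * t) = -(y * (z * t)) := fun t => by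
    rw [← mul_assoc, hzy, neg_mul, mul_assoc]
  have Hxx : ∀ t, x * (x * t) = (2:ℂ)⁻¹ • t := fun t => by
    rw [← mul_assoc, hxx, smul_mul_assoc, one_mul]
  have Hyy : ∀ t, y * (y * t) = (2:ℂ)⁻¹ • t := fun t => by
    rw [← mul_assoc, hyy, smul_mul_assoc, one_mul]
  have Hzz : ∀ t, z * (z * t) = (2:ℂ)⁻¹ • t := fun t => by
    rw [← mul_assoc, hzz, smul_mul_assoc, one_mul]
  refine ⟨?_, ?_, ?_, ?_⟩ <;>
  simp only [mul_assoc, mul_neg, neg_mul, neg_neg, mul_smul_comm, smul_mul_assoc,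
      smul_neg, smul_smul, Hyx, Hzx, Hzy, Hxx, Hyy, Hzz, hyx, hzx, hzy, hxx, hyy, hzz]
  all_goals norm_num [mul_one]

lemma gamma_comm {A : Type*} [Ring A] [Algebra ℂ A] (w x y z : A)
    (hyw : y * w = -(w * y)) (hyx : y * x = -(x * y))
    (hzw : z * w = -(w * z)) (hzx : z * x = -(x * z)) :
    (w*x) * (y*z) = (y*z) * (w*x) := by
  have Hyw : ∀ t, y * (w * t) = -(w * (y * t)) := fun t => by
    rw [← mul_assoc, hyw, neg_mul, mul_assoc]
  have Hyx : ∀ t, y * (x * t) = -(x * (y * t)) := fun t => by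
    rw [← mul_assoc, hyx, neg_mul, mul_assoc]
  have Hzw : ∀ t, z * (w * t) = -(w * (z * t)) := fun t => by
    rw [← mul_assoc, hzw, neg_mul, mul_assoc]
  have Hzx : ∀ t, z * (x * t) = -(x * (z * t)) := fun t => by
    rw [← mul_assoc, hzx, neg_mul, mul_assoc]
  simp only [mul_assoc, mul_neg, neg_mul, neg_neg, Hyw, Hyx, Hzw, Hzx, hyw, hyx, hzw, hzx]

lemma gamma_sq {A : Type*} [Ring A] [Algebra ℂ A] (x y : A)
    (hxx : x * x = (2:ℂ)⁻¹ • 1) (hyy : y * y = (2:ℂ)⁻¹ • 1)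
    (hyx : y * x = -(x * y)) :
    (x*y) * (x*y) = -((4:ℂ)⁻¹) • 1 := by
  have Hyx : ∀ t, y * (x * t) = -(x * (y * t)) := fun t => by
    rw [← mul_assoc, hyx, neg_mul, mul_assoc]
  have Hyy : ∀ t, y * (y * t) = (2:ℂ)⁻¹ • t := fun t => by
    rw [← mul_assoc, hyy, smul_mul_assoc, one_mul]
  have Hxx : ∀ t, x * (x * t) = (2:ℂ)⁻¹ • t := fun t => by
    rw [← mul_assoc, hxx, smul_mul_assoc, one_mul]
  simp only [mul_assoc, mul_neg, neg_mul, neg_neg, mul_smul_comm, smul_mul_assoc,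
    smul_neg, smul_smul, mul_one, one_mul, Hyx, Hxx, Hyy, hyx, hxx, hyy]
  match_scalars <;> norm_num

/-- In (the even part of) the complex Clifford algebra on generators `γ_1, …, γ_n`
with relations `γ_i γ_j + γ_j γ_i = δ_{ij}`, the elements
`F_j = (1/√2)(1 + 2i γ_j γ_{j+1})` satisfy the Temperley-Lieb relations
`F_j² = √2·F_j`, `F_j F_{j±1} F_j = F_j`, and `F_j F_k = F_k F_j` for `|j-k| ≥ 2`. -/
theorem clifford_temperley_lieb (n : ℕ) (A : Type*) [Ring A] [Algebra ℂ A]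
    (γ : ℕ → A)
    (hγ : ∀ i j, i < n → j < n →
      γ i * γ j + γ j * γ i = if i = j then (1 : A) else 0)
    (F : ℕ → A)
    (hF : ∀ j, F j = ((Real.sqrt 2 : ℂ))⁻¹ • (1 + (2 * Complex.I) • (γ j * γ (j + 1)))) :
    (∀ j, j + 1 < n → F j * F j = (Real.sqrt 2 : ℂ) • F j) ∧
    (∀ j, j + 2 < n → F j * F (j + 1) * F j = F j) ∧
    (∀ j, j + 2 < n → F (j + 1) * F j * F (j + 1) = F (j + 1)) ∧
    (∀ j k, j + 1 < n → k + 1 < n → j + 2 ≤ k → F j * F k = F k * F j) := by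
  have hsq : ∀ i, i < n → γ i * γ i = (2:ℂ)⁻¹ • (1:A) := by
    intro i hi
    have h := hγ i i hi hi
    rw [if_pos rfl] at h
    have h2 : (2:ℂ) • (γ i * γ i) = 1 := by rw [two_smul]; exact h
    calc γ i * γ i = (2:ℂ)⁻¹ • ((2:ℂ) • (γ i * γ i)) := by rw [smul_smul]; norm_num
    _ = (2:ℂ)⁻¹ • 1 := by rw [h2]
  have hanti : ∀ i j, i < n → j < n → i ≠ j → γ i * γ j = -(γ j * γ i) := by
    intro i j hi hj hij
    have h := hγ i j hi hj
    rw [if_neg hij] at h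
    exact eq_neg_of_add_eq_zero_left h
  refine ⟨?_, ?_, ?_, ?_⟩
  · intro j hj
    rw [hF]
    exact TL_sq _ (gamma_sq (γ j) (γ (j+1))
      (hsq j (by omega)) (hsq (j+1) hj)
      (hanti (j+1) j hj (by omega) (by omega)))
  · intro j hj
    obtain ⟨haa, hab, haba, hbab⟩ := gamma_pair (γ j) (γ (j+1)) (γ (j+2))
      (hsq j (by omega)) (hsq (j+1) (by omega)) (hsq (j+2) hj)
      (hanti (j+1) j (by omega) (by omega) (by omega))
      (hanti (j+2) j hj (by omega) (by omega))
      (hanti (j+2) (j+1) hj (by omega) (by omega))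
    rw [hF, hF, show j + 1 + 1 = j + 2 from rfl]
    exact TL_braid _ _ haa hab haba
  · intro j hj
    obtain ⟨haa, hab, haba, hbab⟩ := gamma_pair (γ j) (γ (j+1)) (γ (j+2))
      (hsq j (by omega)) (hsq (j+1) (by omega)) (hsq (j+2) hj)
      (hanti (j+1) j (by omega) (by omega) (by omega))
      (hanti (j+2) j hj (by omega) (by omega))
      (hanti (j+2) (j+1) hj (by omega) (by omega))
    have hbb := gamma_sq (γ (j+1)) (γ (j+2))
      (hsq (j+1) (by omega)) (hsq (j+2) hj)
      (hanti (j+2) (j+1) hj (by omega) (by omega))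
    rw [hF, hF, show j + 1 + 1 = j + 2 from rfl]
    exact TL_braid _ _ hbb (by rw [hab, neg_neg]) hbab
  · intro j k hj hk hjk
    rw [hF, hF]
    exact TL_comm _ _ (gamma_comm (γ j) (γ (j+1)) (γ k) (γ (k+1))
      (hanti k j (by omega) (by omega) (by omega))
      (hanti k (j+1) (by omega) (by omega) (by omega))
      (hanti (k+1) j hk (by omega) (by omega))
      (hanti (k+1) (j+1) hk (by omega) (by omega)))
end
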